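/- If H is a simple graph on n vertices with Ore-degree θ(H) ≤ 4, then H is a subgraph of the square of the Hamiltonian path on n vertices, i.e., of the graph P_n^2 on vertex set {1,...,n} with edges between vertices at distance at most 2. -/

import Mathlib

/-- The square of the Hamiltonian path on `n` vertices: vertices `0,…,n-1`, with an edge
between two distinct vertices iff they are at distance at most 2. -/
def pathSquare (n : ℕ) : SimpleGraph (Fin n) :=
  SimpleGraph.fromRel (fun i j : Fin n => |(i : ℤ) - (j : ℤ)| ≤ 2)


namespace Band

set_option linter.unusedSectionVars false
set_option maxHeartbeats 1000000

def zig (k i : ℕ) : ℕ := if 2*i < k then 2*i else 2*(k-1-i)+1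

lemma zig_lt {k i : ℕ} (h : i < k) : zig k i < k := by unfold zig; split <;> omega

lemma zig_inj {k i j : ℕ} (hi : i < k) (hj : j < k) (h : zig k i = zig k j) : i = j := by
  unfold zig at h; split at h <;> split at h <;> omega

lemma zig_consec {k i : ℕ} (h : i+1 < k) : |(zig k i : ℤ) - zig k (i+1)| ≤ 2 := by
  rw [abs_le]; unfold zig; split <;> split <;> constructor <;> push_cast <;> omega

lemma zig_ends {k : ℕ} (h : 2 ≤ k) : |(zig k 0 : ℤ) - zig k (k-1)| ≤ 2 := by
  rw [abs_le]; unfold zig; split <;> split <;> constructor <;> push_cast <;> omega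

variable {V : Type*} [Fintype V] [DecidableEq V]
variable (H : SimpleGraph V) [DecidableRel H.Adj]

lemma triple_card {a b c : V} {s : Finset V} (hab : a ≠ b) (hac : a ≠ c) (hbc : b ≠ c)
    (h : ({a, b, c} : Finset V) ⊆ s) : 3 ≤ s.card := by
  have h3 : ({a, b, c} : Finset V).card = 3 := by
    rw [Finset.card_insert_of_notMem (by simp [hab, hac]), Finset.card_pair hbc]
  calc 3 = ({a,b,c} : Finset V).card := h3.symm
    _ ≤ s.card := Finset.card_le_card h

lemma chain_adj {l : List V} (hch : l.Chain' H.Adj) {a b : ℕ}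
    (ha : a < l.length) (hb : b < l.length) (hab : a + 1 = b) : H.Adj l[a] l[b] := by
  subst hab
  have := List.isChain_iff_getElem.mp hch a (by omega)
  simpa using this

lemma chain_local {l : List V} (hnd : l.Nodup) (hch : l.Chain' H.Adj)
    (hdeg : ∀ x ∈ l, H.degree x ≤ 2) {i j : ℕ}
    (hi : i < l.length) (hj : j < l.length) (hij : i < j)
    (hadj : H.Adj l[i] l[j]) : j = i + 1 ∨ (i = 0 ∧ j + 1 = l.length) := by
  by_contra hcon
  push_neg at hcon
  obtain ⟨h1, h2⟩ := hcon
  have hij2 : i + 2 ≤ j := by omega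
  have hchain : ∀ (a b : ℕ) (ha : a < l.length) (hb : b < l.length), a + 1 = b → H.Adj l[a] l[b] := by
    intro a b ha hb hab
    subst hab
    have := List.isChain_iff_getElem.mp hch a (by omega)
    simpa using this
  have hgetinj : ∀ (a b : ℕ) (ha : a < l.length) (hb : b < l.length), l[a] = l[b] → a = b := by
    intro a b ha hb hh
    exact (hnd.getElem_inj_iff).mp hh
  by_cases hc : j + 1 < l.length
  · have ha1 : H.Adj l[j] l[j-1] := (hchain (j-1) j (by omega) hj (by omega)).symm
    have ha2 : H.Adj l[j] l[j+1] := hchain j (j+1) (by omega) (by omega) rfl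
    have hsub : ({l[i], l[j-1], l[j+1]} : Finset V) ⊆ H.neighborFinset l[j] := by
      intro z hz
      simp only [Finset.mem_insert, Finset.mem_singleton] at hz
      rcases hz with rfl | rfl | rfl
      · exact (SimpleGraph.mem_neighborFinset _ _ _).mpr hadj.symm
      · exact (SimpleGraph.mem_neighborFinset _ _ _).mpr ha1
      · exact (SimpleGraph.mem_neighborFinset _ _ _).mpr ha2
    have : 3 ≤ H.degree l[j] := by
      refine triple_card ?_ ?_ ?_ hsub <;>
        · intro hh; have := hgetinj _ _ (by omega) (by omega) hh; omega
    have := hdeg l[j] (List.getElem_mem _)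
    omega
  · have hi0 : 0 < i := by
      rcases Nat.eq_zero_or_pos i with h | h
      · exact absurd (by omega : j + 1 = l.length) (h2 h)
      · exact h
    have ha1 : H.Adj l[i] l[i-1] := (hchain (i-1) i (by omega) hi (by omega)).symm
    have ha2 : H.Adj l[i] l[i+1] := hchain i (i+1) (by omega) (by omega) rfl
    have hsub : ({l[j], l[i-1], l[i+1]} : Finset V) ⊆ H.neighborFinset l[i] := by
      intro z hz
      simp only [Finset.mem_insert, Finset.mem_singleton] at hz
      rcases hz with rfl | rfl | rfl
      · exact (SimpleGraph.mem_neighborFinset _ _ _).mpr hadj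
      · exact (SimpleGraph.mem_neighborFinset _ _ _).mpr ha1
      · exact (SimpleGraph.mem_neighborFinset _ _ _).mpr ha2
    have : 3 ≤ H.degree l[i] := by
      refine triple_card ?_ ?_ ?_ hsub <;>
        · intro hh; have := hgetinj _ _ (by omega) (by omega) hh; omega
    have := hdeg l[i] (List.getElem_mem _)
    omega

lemma chain_closed {l : List V} (hnd : l.Nodup) (hch : l.Chain' H.Adj)
    (hdeg : ∀ x ∈ l, H.degree x ≤ 2) (hne : l ≠ [])
    (hhead : ∀ y, H.Adj (l[0]'(by simpa [List.length_pos_iff] using hne)) y → y ∈ l)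
    (hlast : ∀ y, H.Adj (l[l.length - 1]'(by
      have : l.length ≠ 0 := by simpa using hne
      omega)) y → y ∈ l) :
    ∀ x ∈ l, ∀ y, H.Adj x y → y ∈ l := by
  have hlen : 0 < l.length := by simpa [List.length_pos_iff] using hne
  intro x hx y hxy
  obtain ⟨i, hi, rfl⟩ := List.mem_iff_getElem.mp hx
  rcases Nat.eq_zero_or_pos i with rfl | hi0
  · exact hhead y hxy
  by_cases hilast : i = l.length - 1
  · subst hilast; exact hlast y hxy
  have hi1 : i + 1 < l.length := by omega
  have hchain : ∀ (a b : ℕ) (ha : a < l.length) (hb : b < l.length), a + 1 = b → H.Adj l[a] l[b] := by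
    intro a b ha hb hab
    subst hab
    have := List.isChain_iff_getElem.mp hch a (by omega)
    simpa using this
  have ha1 : H.Adj l[i] l[i-1] := (hchain (i-1) i (by omega) hi (by omega)).symm
  have ha2 : H.Adj l[i] l[i+1] := hchain i (i+1) hi hi1 rfl
  have hne' : l[i-1] ≠ l[i+1] := by
    intro hh
    have := (hnd.getElem_inj_iff).mp hh
    omega
  have hsub : ({l[i-1], l[i+1]} : Finset V) ⊆ H.neighborFinset l[i] := by
    intro z hz
    simp only [Finset.mem_insert, Finset.mem_singleton] at hz
    rcases hz with rfl | rfl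
    · exact (SimpleGraph.mem_neighborFinset _ _ _).mpr ha1
    · exact (SimpleGraph.mem_neighborFinset _ _ _).mpr ha2
  have heq : ({l[i-1], l[i+1]} : Finset V) = H.neighborFinset l[i] := by
    apply Finset.eq_of_subset_of_card_le hsub
    rw [Finset.card_pair hne']
    exact hdeg _ (List.getElem_mem _)
  have hy : y ∈ H.neighborFinset l[i] := (SimpleGraph.mem_neighborFinset _ _ _).mpr hxy
  rw [← heq] at hy
  simp only [Finset.mem_insert, Finset.mem_singleton] at hy
  rcases hy with rfl | rfl <;> exact List.getElem_mem _

lemma mem_of_walk {l : List V} (hcl : ∀ x ∈ l, ∀ y, H.Adj x y → y ∈ l)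
    {a b : V} (w : H.Walk a b) (ha : a ∈ l) : b ∈ l := by
  induction w with
  | nil => exact ha
  | cons had p ih => exact ih (hcl _ ha _ had)

lemma head_reachable : ∀ (c : V) (l : List V), (c :: l).Chain' H.Adj →
    ∀ b ∈ c :: l, H.Reachable c b := by
  intro c l
  induction l generalizing c with
  | nil =>
    intro _ b hb
    simp only [List.mem_singleton] at hb
    subst hb
    exact SimpleGraph.Reachable.refl _
  | cons d l ih =>
    intro hch b hb
    rw [List.Chain', List.isChain_cons_cons] at hch
    rcases List.mem_cons.mp hb with rfl | hb'
    · exact SimpleGraph.Reachable.refl _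
    · exact (hch.1.reachable).trans (ih d hch.2 b hb')

noncomputable def extend : ℕ → List V → List V
  | 0, l => l
  | _+1, [] => []
  | fuel+1, c :: l =>
    if h : ((H.neighborFinset c).filter (· ∉ c :: l)).Nonempty then
      extend fuel (h.choose :: c :: l)
    else c :: l

lemma extend_spec (hθ : ∀ x y : V, H.Adj x y → H.degree x + H.degree y ≤ 4) :
    ∀ (fuel : ℕ) (c : V) (l : List V),
      (c :: l).Nodup → (c :: l).Chain' H.Adj → (∀ x ∈ c :: l, H.degree x ≤ 2) →
      l ≠ [] → Fintype.card V < fuel + (c :: l).length →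
      ∃ d m, extend H fuel (c :: l) = d :: m ∧
        (∃ t, d :: m = t ++ c :: l) ∧
        (d :: m).Nodup ∧ (d :: m).Chain' H.Adj ∧
        (∀ x ∈ d :: m, H.degree x ≤ 2) ∧
        (∀ y, H.Adj d y → y ∈ d :: m) := by
  intro fuel
  induction fuel with
  | zero =>
    intro c l hnd _ _ _ hcard
    exfalso
    have := hnd.length_le_card
    simp only [List.length_cons] at hcard this
    omega
  | succ fuel ih =>
    intro c l hnd hch hdeg hl hcard
    by_cases h : ((H.neighborFinset c).filter (· ∉ c :: l)).Nonempty
    · have hext : extend H (fuel+1) (c :: l) = extend H fuel (h.choose :: c :: l) := by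
        rw [extend, dif_pos h]
      obtain ⟨hy1, hy2⟩ : h.choose ∈ H.neighborFinset c ∧ h.choose ∉ c :: l := by
        have := h.choose_spec
        simp only [Finset.mem_filter, decide_not] at this
        constructor
        · exact this.1
        · simpa using this.2
      set y := h.choose with hy
      have hadj : H.Adj c y := (SimpleGraph.mem_neighborFinset _ _ _).mp hy1
      obtain ⟨e, l', rfl⟩ : ∃ e l', l = e :: l' := by
        cases l with
        | nil => exact absurd rfl hl
        | cons e l' => exact ⟨e, l', rfl⟩
      have hce : H.Adj c e := (List.isChain_cons_cons.mp hch).1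
      have hye : y ≠ e := by
        intro hh
        exact hy2 (by simp [hh])
      have hdegc : 2 ≤ H.degree c := by
        have hsub : ({y, e} : Finset V) ⊆ H.neighborFinset c := by
          intro z hz
          simp only [Finset.mem_insert, Finset.mem_singleton] at hz
          rcases hz with rfl | rfl
          · exact (SimpleGraph.mem_neighborFinset _ _ _).mpr hadj
          · exact (SimpleGraph.mem_neighborFinset _ _ _).mpr hce
        calc 2 = ({y, e} : Finset V).card := (Finset.card_pair hye).symm
          _ ≤ (H.neighborFinset c).card := Finset.card_le_card hsub
      have hdegy : H.degree y ≤ 2 := by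
        have h1 := hθ c y hadj
        have h2 := hdeg c (by simp)
        omega
      have hres := ih y (c :: e :: l')
        (by rw [List.nodup_cons]; exact ⟨hy2, hnd⟩)
        (List.isChain_cons_cons.mpr ⟨hadj.symm, hch⟩)
        (by
          intro x hx
          rcases List.mem_cons.mp hx with rfl | hx'
          · exact hdegy
          · exact hdeg x hx')
        (by simp)
        (by simp only [List.length_cons] at hcard ⊢; omega)
      obtain ⟨d, m, hext', ⟨t, ht⟩, h1, h2, h3, h4⟩ := hres
      refine ⟨d, m, by rw [hext, hext'], ⟨t ++ [y], ?_⟩, h1, h2, h3, h4⟩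
      rw [ht]
      simp
    · have hext : extend H (fuel+1) (c :: l) = c :: l := by
        rw [extend, dif_neg h]
      refine ⟨c, l, hext, ⟨[], rfl⟩, hnd, hch, hdeg, ?_⟩
      intro z hz
      by_contra hzl
      exact h ⟨z, Finset.mem_filter.mpr ⟨(SimpleGraph.mem_neighborFinset _ _ _).mpr hz, by simpa using hzl⟩⟩

lemma finish {l : List V} (hne : l ≠ []) (hnd : l.Nodup)
    (hcl : ∀ x ∈ l, ∀ y, H.Adj x y → y ∈ l)
    (hloc : ∀ (i j : ℕ) (hi : i < l.length) (hj : j < l.length), i < j → H.Adj l[i] l[j] →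
      j = i + 1 ∨ (i = 0 ∧ j + 1 = l.length)) :
    ∃ (s : Finset V) (g : V → ℕ), s = l.toFinset ∧
      (∀ x ∈ s, ∀ y, H.Adj x y → y ∈ s) ∧ Set.InjOn g s ∧
      (∀ x ∈ s, g x < s.card) ∧
      (∀ x y, H.Adj x y → x ∈ s → y ∈ s → |(g x : ℤ) - g y| ≤ 2) := by
  have claim : ∀ (i j : ℕ) (hi : i < l.length) (hj : j < l.length), i < j → H.Adj l[i] l[j] →
      |(zig l.length i : ℤ) - zig l.length j| ≤ 2 := by
    intro i j hi hj hij hadj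
    rcases hloc i j hi hj hij hadj with rfl | ⟨rfl, hj1⟩
    · exact zig_consec hj
    · have hj' : j = l.length - 1 := by omega
      rw [hj']
      exact zig_ends (by omega)
  refine ⟨l.toFinset, fun z => zig l.length (l.idxOf z), rfl, ?_, ?_, ?_, ?_⟩
  · intro x hx y hxy
    rw [List.mem_toFinset] at *
    exact hcl x hx y hxy
  · intro x hx y hy h
    simp only [Finset.coe_sort_coe, Finset.mem_coe, List.mem_toFinset] at hx hy
    have hix := List.idxOf_lt_length_iff.mpr hx
    have hiy := List.idxOf_lt_length_iff.mpr hy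
    exact (List.idxOf_inj hx).mp (zig_inj hix hiy h)
  · intro x hx
    rw [List.mem_toFinset] at hx
    rw [List.toFinset_card_of_nodup hnd]
    exact zig_lt (List.idxOf_lt_length_iff.mpr hx)
  · intro x y hadj hx hy
    rw [List.mem_toFinset] at hx hy
    have hix := List.idxOf_lt_length_iff.mpr hx
    have hiy := List.idxOf_lt_length_iff.mpr hy
    have h1 := List.getElem_idxOf hix
    have h2 := List.getElem_idxOf hiy
    rcases lt_trichotomy (l.idxOf x) (l.idxOf y) with hlt | heq | hgt
    · exact claim _ _ hix hiy hlt (by rw [h1, h2]; exact hadj)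
    · exact absurd ((List.idxOf_inj hx).mp heq) hadj.ne
    · rw [abs_sub_comm]
      exact claim _ _ hiy hix hgt (by rw [h1, h2]; exact hadj.symm)


lemma star_case (hθ : ∀ x y : V, H.Adj x y → H.degree x + H.degree y ≤ 4)
    {c : V} (hc : H.degree c = 3) :
    ∃ (s : Finset V) (g : V → ℕ), (∀ z, H.Adj c z → z ∈ s) ∧ c ∈ s ∧
      (∀ x ∈ s, ∀ y, H.Adj x y → y ∈ s) ∧ Set.InjOn g s ∧
      (∀ x ∈ s, g x < s.card) ∧
      (∀ x y, H.Adj x y → x ∈ s → y ∈ s → |(g x : ℤ) - g y| ≤ 2) := by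
  have hc' : (H.neighborFinset c).card = 3 := hc
  obtain ⟨a, b, d, hab, had, hbd, hnbr⟩ := Finset.card_eq_three.mp hc'
  have hca : H.Adj c a := by
    have : a ∈ H.neighborFinset c := by rw [hnbr]; simp
    exact (SimpleGraph.mem_neighborFinset _ _ _).mp this
  have hcb : H.Adj c b := by
    have : b ∈ H.neighborFinset c := by rw [hnbr]; simp
    exact (SimpleGraph.mem_neighborFinset _ _ _).mp this
  have hcd : H.Adj c d := by
    have : d ∈ H.neighborFinset c := by rw [hnbr]; simp
    exact (SimpleGraph.mem_neighborFinset _ _ _).mp this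
  have hleaf : ∀ z, H.Adj c z → ∀ y, H.Adj z y → y = c := by
    intro z hz y hy
    have hdz : H.degree z ≤ 1 := by have := hθ c z hz; omega
    by_contra hne
    have hsub : ({y, c} : Finset V) ⊆ H.neighborFinset z := by
      intro w hw
      simp only [Finset.mem_insert, Finset.mem_singleton] at hw
      rcases hw with rfl | rfl
      · exact (SimpleGraph.mem_neighborFinset _ _ _).mpr hy
      · exact (SimpleGraph.mem_neighborFinset _ _ _).mpr hz.symm
    have : 2 ≤ H.degree z := by
      calc 2 = ({y, c} : Finset V).card := (Finset.card_pair hne).symm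
        _ ≤ _ := Finset.card_le_card hsub
    omega
  have hac : a ≠ c := hca.ne'
  have hbc : b ≠ c := hcb.ne'
  have hdc : d ≠ c := hcd.ne'
  set g : V → ℕ := fun x => if x = a then 0 else if x = c then 1 else if x = b then 2 else 3
    with hg
  have gva : g a = 0 := by simp [hg]
  have gvc : g c = 1 := by simp [hg, Ne.symm hac]
  have gvb : g b = 2 := by simp [hg, Ne.symm hab, hbc]
  have gvd : g d = 3 := by simp [hg, Ne.symm had, hdc, Ne.symm hbd]
  have hcard : ({a, c, b, d} : Finset V).card = 4 := by
    rw [Finset.card_insert_of_notMem (by simp [hab, had, hac]),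
      Finset.card_insert_of_notMem (by simp [Ne.symm hbc, Ne.symm hdc]),
      Finset.card_pair hbd]
  have hmem : ∀ z : V, z ∈ ({a, c, b, d} : Finset V) ↔ z = a ∨ z = c ∨ z = b ∨ z = d := by
    intro z; simp [Finset.mem_insert]
  refine ⟨{a, c, b, d}, g, ?_, by simp, ?_, ?_, ?_, ?_⟩
  · intro z hz
    have : z ∈ H.neighborFinset c := (SimpleGraph.mem_neighborFinset _ _ _).mpr hz
    rw [hnbr] at this
    simp only [Finset.mem_insert, Finset.mem_singleton] at this ⊢
    tauto
  · intro x hx y hxy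
    rw [hmem] at hx
    rw [hmem]
    rcases hx with rfl | rfl | rfl | rfl
    · have := hleaf x hca y hxy; tauto
    · have : y ∈ H.neighborFinset x := (SimpleGraph.mem_neighborFinset _ _ _).mpr hxy
      rw [hnbr] at this
      simp only [Finset.mem_insert, Finset.mem_singleton] at this
      tauto
    · have := hleaf x hcb y hxy; tauto
    · have := hleaf x hcd y hxy; tauto
  · intro x hx y hy hxy
    simp only [Finset.coe_insert, Set.mem_insert_iff, Finset.coe_singleton,
      Set.mem_singleton_iff] at hx hy
    rcases hx with rfl | rfl | rfl | rfl <;> rcases hy with rfl | rfl | rfl | rfl <;>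
      first
        | rfl
        | (exfalso; simp only [gva, gvc, gvb, gvd] at hxy; try omega)
  · intro x hx
    rw [hmem] at hx
    rw [hcard]
    rcases hx with rfl | rfl | rfl | rfl <;> omega
  · intro x y hxy hx hy
    rw [hmem] at hx
    rcases hx with rfl | rfl | rfl | rfl
    · have := hleaf x hca y hxy
      subst this
      rw [gva, gvc]; norm_num
    · have : y ∈ H.neighborFinset x := (SimpleGraph.mem_neighborFinset _ _ _).mpr hxy
      rw [hnbr] at this
      simp only [Finset.mem_insert, Finset.mem_singleton] at this
      rcases this with rfl | rfl | rfl
      · rw [gva, gvc]; norm_num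
      · rw [gvc, gvb]; norm_num
      · rw [gvc, gvd]; norm_num
    · have := hleaf x hcb y hxy
      subst this
      rw [gvb, gvc]; norm_num
    · have := hleaf x hcd y hxy
      subst this
      rw [gvd, gvc]; norm_num


lemma comp (hθ : ∀ x y : V, H.Adj x y → H.degree x + H.degree y ≤ 4) (v : V) :
    ∃ (s : Finset V) (g : V → ℕ), v ∈ s ∧
      (∀ x ∈ s, ∀ y, H.Adj x y → y ∈ s) ∧ Set.InjOn g s ∧
      (∀ x ∈ s, g x < s.card) ∧
      (∀ x y, H.Adj x y → x ∈ s → y ∈ s → |(g x : ℤ) - g y| ≤ 2) := by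
  by_cases hv0 : H.degree v = 0
  · refine ⟨{v}, fun _ => 0, by simp, ?_, ?_, by simp, ?_⟩
    · intro x hx y hxy
      exfalso
      simp only [Finset.mem_singleton] at hx
      subst hx
      have : y ∈ H.neighborFinset x := (SimpleGraph.mem_neighborFinset _ _ _).mpr hxy
      rw [Finset.card_eq_zero.mp hv0] at this
      simp at this
    · intro x hx y hy _
      simp only [Finset.coe_singleton, Set.mem_singleton_iff] at hx hy
      rw [hx, hy]
    · intro x y hxy hx _
      exfalso
      simp only [Finset.mem_singleton] at hx
      subst hx
      have : y ∈ H.neighborFinset x := (SimpleGraph.mem_neighborFinset _ _ _).mpr hxy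
      rw [Finset.card_eq_zero.mp hv0] at this
      simp at this
  have hv1 : 0 < H.degree v := Nat.pos_of_ne_zero hv0
  obtain ⟨w, hw⟩ := Finset.card_pos.mp hv1
  have hvw : H.Adj v w := (SimpleGraph.mem_neighborFinset _ _ _).mp hw
  have hdw1 : 1 ≤ H.degree w := by
    apply Finset.card_pos.mpr
    exact ⟨v, (SimpleGraph.mem_neighborFinset _ _ _).mpr hvw.symm⟩
  have hdv3 : H.degree v ≤ 3 := by have := hθ v w hvw; omega
  by_cases hv3 : H.degree v = 3
  · obtain ⟨s, g, _, hvs, hclosed, hinj, hbound, hband⟩ := star_case H hθ hv3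
    exact ⟨s, g, hvs, hclosed, hinj, hbound, hband⟩
  by_cases hw3 : H.degree w = 3
  · obtain ⟨s, g, hnb, _, hclosed, hinj, hbound, hband⟩ := star_case H hθ hw3
    exact ⟨s, g, hnb v hvw.symm, hclosed, hinj, hbound, hband⟩
  have hdv : H.degree v ≤ 2 := by omega
  have hdw : H.degree w ≤ 2 := by have := hθ v w hvw; omega
  -- first walk, starting from v towards w
  obtain ⟨d, m, hext, ⟨t, ht⟩, hnd, hch, hdeg, hhead⟩ :=
    extend_spec H hθ (Fintype.card V) w [v]
      (by simp [hvw.ne'])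
      (List.isChain_pair.mpr hvw.symm)
      (by
        intro x hx
        rcases List.mem_cons.mp hx with rfl | hx'
        · exact hdw
        · simp only [List.mem_singleton] at hx'
          subst hx'
          exact hdv)
      (by simp)
      (by simp only [List.length_cons, List.length_nil]; omega)
  obtain ⟨x, m', rfl⟩ : ∃ x m', m = x :: m' := by
    cases m with
    | nil =>
      exfalso
      have := congrArg List.length ht
      simp at this
    | cons x m' => exact ⟨x, m', rfl⟩
  have hdx : H.Adj d x := (List.isChain_cons_cons.mp hch).1
  have hlen : (d :: x :: m').length = t.length + 2 := by
    have := congrArg List.length ht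
    simpa using this
  have hvL : v ∈ d :: x :: m' := by rw [ht]; simp
  have hlenL : (d :: x :: m').length = m'.length + 2 := by simp
  have hwL : w ∈ d :: x :: m' := by rw [ht]; simp
  have ht' : d :: x :: m' = (t ++ [w]) ++ v :: [] := by rw [ht]; simp
  have hgv : (d :: x :: m')[t.length + 1]'(by omega) = v :=
    List.getElem_of_append ht' (by simp)
  have hgw : (d :: x :: m')[t.length]'(by omega) = w :=
    List.getElem_of_append (by rw [ht]) rfl
  by_cases hcyc : ∃ u ∈ d :: x :: m', H.Adj d u ∧ u ≠ x
  · -- cycle case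
    obtain ⟨u, hu, hdu, hux⟩ := hcyc
    obtain ⟨j, hj, hju⟩ := List.mem_iff_getElem.mp hu
    have hj0 : j ≠ 0 := by
      intro hh
      subst hh
      exact hdu.ne (by simpa using hju)
    have hj1 : j ≠ 1 := by
      intro hh
      subst hh
      exact hux (by simpa using hju.symm)
    have hloc0 := chain_local H hnd hch hdeg (by simp : 0 < (d :: x :: m').length) hj
      (by omega) (by simpa [hju] using hdu)
    have hjlast : j + 1 = (d :: x :: m').length := by
      rcases hloc0 with h | ⟨_, h⟩
      · omega
      · exact h
    -- last-closed
    have hlast : ∀ y, H.Adj ((d :: x :: m')[(d :: x :: m').length - 1]'(by omega)) y →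
        y ∈ d :: x :: m' := by
      have hju' : (d :: x :: m')[(d :: x :: m').length - 1]'(by omega) = u := by
        have : (d :: x :: m').length - 1 = j := by omega
        simp only [this]
        exact hju
      rw [hju']
      intro y hy
      have ha1 : H.Adj u ((d :: x :: m')[j-1]'(by omega)) := by
        have hchain := chain_adj H hch (a := j - 1) (b := j) (by omega) hj (by omega)
        rw [hju] at hchain
        exact hchain.symm
      have hne2 : (d :: x :: m')[j-1]'(by omega) ≠ d := by
        intro hh
        have : (d :: x :: m')[j-1]'(by omega) = (d :: x :: m')[0]'(by simp) := by simpa using hh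
        have := (hnd.getElem_inj_iff).mp this
        omega
      have hsub : ({(d :: x :: m')[j-1]'(by omega), d} : Finset V) ⊆ H.neighborFinset u := by
        intro z hz
        simp only [Finset.mem_insert, Finset.mem_singleton] at hz
        rcases hz with rfl | rfl
        · exact (SimpleGraph.mem_neighborFinset _ _ _).mpr ha1
        · exact (SimpleGraph.mem_neighborFinset _ _ _).mpr hdu.symm
      have heq : ({(d :: x :: m')[j-1]'(by omega), d} : Finset V) = H.neighborFinset u := by
        apply Finset.eq_of_subset_of_card_le hsub
        rw [Finset.card_pair hne2]
        exact hdeg u hu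
      have hy' : y ∈ H.neighborFinset u := (SimpleGraph.mem_neighborFinset _ _ _).mpr hy
      rw [← heq] at hy'
      simp only [Finset.mem_insert, Finset.mem_singleton] at hy'
      rcases hy' with rfl | rfl
      · exact List.getElem_mem _
      · simp
    have hclosed := chain_closed H hnd hch hdeg (by simp) (fun y hy => hhead y hy) hlast
    obtain ⟨s, g, hs, h1, h2, h3, h4⟩ := finish H (by simp) hnd hclosed
      (fun i j hi hj hij hadj => chain_local H hnd hch hdeg hi hj hij hadj)
    exact ⟨s, g, by rw [hs]; exact List.mem_toFinset.mpr hvL, h1, h2, h3, h4⟩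
  · -- path case
    push_neg at hcyc
    have hnbrd : ∀ y, H.Adj d y → y = x := fun y hy => hcyc y (hhead y hy) hy
    obtain ⟨d₂, m₂, hext₂, ⟨t₂, ht₂⟩, hnd₂, hch₂, hdeg₂, hhead₂⟩ :=
      extend_spec H hθ (Fintype.card V) x [d]
        (by simp [hdx.ne'])
        (List.isChain_pair.mpr hdx.symm)
        (by
          intro z hz
          rcases List.mem_cons.mp hz with rfl | hz'
          · exact hdeg z (by simp)
          · simp only [List.mem_singleton] at hz'
            subst hz'
            exact hdeg z (by simp))
        (by simp)
        (by simp only [List.length_cons, List.length_nil]; omega)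
    have hlen₂ : (d₂ :: m₂).length = t₂.length + 2 := by
      have := congrArg List.length ht₂
      simpa using this
    have hlenL₂ : (d₂ :: m₂).length = m₂.length + 1 := by simp
    have hdL₂ : d ∈ d₂ :: m₂ := by rw [ht₂]; simp
    have hxL₂ : x ∈ d₂ :: m₂ := by rw [ht₂]; simp
    have ht₂' : d₂ :: m₂ = (t₂ ++ [x]) ++ d :: [] := by rw [ht₂]; simp
    have hgd : (d₂ :: m₂)[t₂.length + 1]'(by omega) = d :=
      List.getElem_of_append ht₂' (by simp)
    have hgx : (d₂ :: m₂)[t₂.length]'(by omega) = x :=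
      List.getElem_of_append (by rw [ht₂]) rfl
    have hlastd : (d₂ :: m₂)[(d₂ :: m₂).length - 1]'(by omega) = d := by
      have : (d₂ :: m₂).length - 1 = t₂.length + 1 := by omega
      simp only [this]
      exact hgd
    have hlast₂ : ∀ y, H.Adj ((d₂ :: m₂)[(d₂ :: m₂).length - 1]'(by omega)) y →
        y ∈ d₂ :: m₂ := by
      rw [hlastd]
      intro y hy
      rw [hnbrd y hy]
      exact hxL₂
    have hclosed₂ := chain_closed H hnd₂ hch₂ hdeg₂ (by simp) (fun y hy => hhead₂ y hy) hlast₂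
    have hvL₂ : v ∈ d₂ :: m₂ := by
      have hreach : H.Reachable d v := head_reachable H d (x :: m') hch v hvL
      obtain ⟨p⟩ := hreach
      exact mem_of_walk H hclosed₂ p hdL₂
    have hloc₂ : ∀ (i j : ℕ) (hi : i < (d₂ :: m₂).length) (hj : j < (d₂ :: m₂).length),
        i < j → H.Adj ((d₂ :: m₂)[i]'hi) ((d₂ :: m₂)[j]'hj) →
        j = i + 1 ∨ (i = 0 ∧ j + 1 = (d₂ :: m₂).length) := by
      intro i j hi hj hij hadj
      rcases chain_local H hnd₂ hch₂ hdeg₂ hi hj hij hadj with h | ⟨hi0, hj1⟩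
      · exact Or.inl h
      · subst hi0
        have hjval : (d₂ :: m₂)[j]'hj = d := by
          have : j = (d₂ :: m₂).length - 1 := by omega
          simp only [this]
          exact hlastd
        rw [hjval] at hadj
        have h0x : (d₂ :: m₂)[0]'(by simp) = x := hnbrd _ hadj.symm
        have h0t : (0 : ℕ) = t₂.length := (hnd₂.getElem_inj_iff).mp (h0x.trans hgx.symm)
        left
        omega
    obtain ⟨s, g, hs, h1, h2, h3, h4⟩ := finish H (by simp) hnd₂ hclosed₂ hloc₂
    exact ⟨s, g, by rw [hs]; exact List.mem_toFinset.mpr hvL₂, h1, h2, h3, h4⟩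


universe u

lemma main : ∀ (N : ℕ) (W : Type u) [Fintype W] [DecidableEq W] (G : SimpleGraph W)
    [DecidableRel G.Adj],
    (∀ x y : W, G.Adj x y → G.degree x + G.degree y ≤ 4) → Fintype.card W ≤ N →
    ∃ f : W → ℕ, Function.Injective f ∧ (∀ x, f x < Fintype.card W) ∧
      (∀ x y, G.Adj x y → |(f x : ℤ) - f y| ≤ 2) := by
  intro N
  induction N with
  | zero =>
    intro W _ _ G _ hθ hcard
    have h0 : Fintype.card W = 0 := by omega
    have := Fintype.card_eq_zero_iff.mp h0
    exact ⟨fun _ => 0, fun a => (this.false a).elim, fun a => (this.false a).elim,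
      fun a => (this.false a).elim⟩
  | succ N ih =>
    intro W _ _ G _ hθ hcard
    by_cases h0 : Fintype.card W = 0
    · have := Fintype.card_eq_zero_iff.mp h0
      exact ⟨fun _ => 0, fun a => (this.false a).elim, fun a => (this.false a).elim,
        fun a => (this.false a).elim⟩
    · obtain ⟨v⟩ : Nonempty W := Fintype.card_pos_iff.mp (Nat.pos_of_ne_zero h0)
      obtain ⟨s, g, hvs, hclosed, hinj, hbound, hband⟩ := comp G hθ v
      haveI hDR : DecidableRel (G.comap (Subtype.val : {x : W // x ∉ s} → W)).Adj :=
        fun a b => ‹DecidableRel G.Adj› a.val b.val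
      have hdeg' : ∀ a : {x : W // x ∉ s},
          (G.comap (Subtype.val : {x : W // x ∉ s} → W)).degree a ≤ G.degree a.val := by
        intro a
        apply Finset.card_le_card_of_injOn (fun b => b.val)
        · intro b hb
          simp only [Finset.mem_coe, SimpleGraph.mem_neighborFinset] at hb ⊢
          exact hb
        · intro b _ c _ h
          exact Subtype.ext h
      have hθ' : ∀ x y : {x : W // x ∉ s},
          (G.comap (Subtype.val : {x : W // x ∉ s} → W)).Adj x y →
          (G.comap (Subtype.val : {x : W // x ∉ s} → W)).degree x +
          (G.comap (Subtype.val : {x : W // x ∉ s} → W)).degree y ≤ 4 := by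
        intro x y hxy
        have h1 := hdeg' x
        have h2 := hdeg' y
        have := hθ x.val y.val hxy
        omega
      have hsle : s.card ≤ Fintype.card W := by
        rw [← Finset.card_univ]
        exact Finset.card_le_card (Finset.subset_univ s)
      have hcardW' : Fintype.card {x : W // x ∉ s} = Fintype.card W - s.card := by
        have he : (Finset.univ.filter (fun x : W => x ∉ s)) = Finset.univ \ s := by
          ext z; simp
        rw [Fintype.card_subtype, he, Finset.card_sdiff_of_subset (Finset.subset_univ s),
          Finset.card_univ]
      have hcard' : Fintype.card {x : W // x ∉ s} ≤ N := by
        have h2 : 1 ≤ s.card := Finset.card_pos.mpr ⟨v, hvs⟩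
        omega
      obtain ⟨f', hf'inj, hf'bound, hf'band⟩ :=
        ih {x : W // x ∉ s} (G.comap Subtype.val) hθ' hcard'
      refine ⟨fun z => if hz : z ∈ s then g z else s.card + f' ⟨z, hz⟩, ?_, ?_, ?_⟩
      · intro a b hab
        by_cases ha : a ∈ s <;> by_cases hb : b ∈ s
        · simp only [dif_pos ha, dif_pos hb] at hab
          exact hinj (by simpa using ha) (by simpa using hb) hab
        · simp only [dif_pos ha, dif_neg hb] at hab
          have := hbound a ha
          omega
        · simp only [dif_neg ha, dif_pos hb] at hab
          have := hbound b hb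
          omega
        · simp only [dif_neg ha, dif_neg hb] at hab
          have heq : f' ⟨a, ha⟩ = f' ⟨b, hb⟩ := by omega
          exact congrArg Subtype.val (hf'inj heq)
      · intro z
        by_cases hz : z ∈ s
        · simp only [dif_pos hz]
          have := hbound z hz
          omega
        · simp only [dif_neg hz]
          have := hf'bound ⟨z, hz⟩
          omega
      · intro a b hab
        by_cases ha : a ∈ s
        · have hbs : b ∈ s := hclosed a ha b hab
          simp only [dif_pos ha, dif_pos hbs]
          exact hband a b hab ha hbs
        · have hbs : b ∉ s := fun hb => ha (hclosed b hb a hab.symm)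
          simp only [dif_neg ha, dif_neg hbs]
          have hb2 := hf'band ⟨a, ha⟩ ⟨b, hbs⟩ hab
          have heq : (↑(s.card + f' ⟨a, ha⟩) : ℤ) - ↑(s.card + f' ⟨b, hbs⟩) =
              (f' ⟨a, ha⟩ : ℤ) - f' ⟨b, hbs⟩ := by push_cast; ring
          rw [heq]
          exact hb2

end Band

/-- If `H` is a simple graph on `n` vertices in which `deg x + deg y ≤ 4` for every edge
`xy` (i.e. `θ(H) ≤ 4`), then `H` is a subgraph of `P_n²`, the square of the Hamiltonian
path on `n` vertices. -/
theorem stmt_4 {V : Type*} [Fintype V] [DecidableEq V] (n : ℕ)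
    (hcard : Fintype.card V = n) (H : SimpleGraph V) [DecidableRel H.Adj]
    (hθ : ∀ x y : V, H.Adj x y → H.degree x + H.degree y ≤ 4) :
    ∃ f : V → Fin n, Function.Injective f ∧
      ∀ x y : V, H.Adj x y → (pathSquare n).Adj (f x) (f y) := by
  obtain ⟨f, hinj, hbound, hband⟩ := Band.main (Fintype.card V) V H hθ le_rfl
  refine ⟨fun x => ⟨f x, by rw [← hcard]; exact hbound x⟩, ?_, ?_⟩
  · intro a b h
    exact hinj (congrArg Fin.val h)
  · intro x y hxy
    have hne : f x ≠ f y := fun h => hxy.ne (hinj h)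
    rw [pathSquare, SimpleGraph.fromRel_adj]
    constructor
    · intro h
      exact hne (congrArg Fin.val h)
    · left
      have := hband x y hxy
      simpa using this
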